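/- Let C be a finite set with |C| ≥ 2 and let N : C × C → ℤ be antisymmetric (N(a,b) = −N(b,a) for all a,b) with N(a,b) odd for every pair of distinct candidates a,b. Then there exists a profile P, consisting of an odd number of votes, whose net advantage function equals N, i.e., netadv_P(a,b) = N(a,b) for all distinct a,b. -/

import Mathlib

set_option linter.unusedSectionVars false
set_option linter.unusedVariables false

/-- A vote over a finite candidate set `C` is a linear order on `C`, encoded as the
ranking equivalence sending each candidate to its position (position `0` is the top). -/
abbrev Vote (C : Type*) [Fintype C] : Type _ := C ≃ Fin (Fintype.card C)

/-- `adv P a b` is the number of votes in the profile `P` ranking `a` above `b`. -/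
def adv {C : Type*} [Fintype C] (P : List (Vote C)) (a b : C) : ℕ :=
  P.countP (fun v => decide (v a < v b))

/-- The net advantage of `a` over `b` in the profile `P`. -/
def netadv {C : Type*} [Fintype C] (P : List (Vote C)) (a b : C) : ℤ :=
  (adv P a b : ℤ) - (adv P b a : ℤ)

section Aux

variable {C : Type*} [Fintype C] [DecidableEq C]

lemma netadv_append (P Q : List (Vote C)) (a b : C) :
    netadv (P ++ Q) a b = netadv P a b + netadv Q a b := by
  simp only [netadv, adv, List.countP_append, Nat.cast_add]; ring

lemma netadv_self (P : List (Vote C)) (a : C) : netadv P a a = 0 := by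
  simp [netadv]

lemma netadv_anti (P : List (Vote C)) (a b : C) : netadv P a b = - netadv P b a := by
  simp only [netadv]; ring

lemma netadv_flatten (L : List (List (Vote C))) (a b : C) :
    netadv L.flatten a b = (L.map (fun l => netadv l a b)).sum := by
  induction L with
  | nil => simp [netadv, adv]
  | cons h t ih => simp [List.flatten_cons, netadv_append, ih]

/-- The permutation of `Fin n` sending `0 ↦ n-2`, `1 ↦ n-1`, and `k ↦ n-1-k` otherwise. -/
def gperm (n : ℕ) (hn : 2 ≤ n) : Equiv.Perm (Fin n) :=
  (Fin.revPerm).trans (Equiv.swap ⟨n - 1, by omega⟩ ⟨n - 2, by omega⟩)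

lemma gperm_val {n : ℕ} (hn : 2 ≤ n) (k : Fin n) :
    ((gperm n hn) k).val =
      if k.val = 0 then n - 2 else if k.val = 1 then n - 1 else n - 1 - k.val := by
  rcases k with ⟨k, hk⟩
  simp only [gperm, Equiv.trans_apply, Fin.revPerm_apply, Equiv.swap_apply_def]
  split_ifs <;> simp_all [Fin.ext_iff, Fin.val_rev] <;> omega

variable (hm : 2 ≤ Fintype.card C)

/-- A vote placing `a` first and `b` second. -/
noncomputable def vote1 (a b : C) : Vote C :=
  let e0 := Fintype.equivFin C
  let e1 := e0.trans (Equiv.swap (e0 a) ⟨0, by omega⟩)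
  e1.trans (Equiv.swap (e1 b) ⟨1, by omega⟩)

lemma vote1_a {a b : C} (hab : a ≠ b) : vote1 hm a b a = ⟨0, by omega⟩ := by
  simp only [vote1, Equiv.trans_apply, Equiv.swap_apply_left]
  apply Equiv.swap_apply_of_ne_of_ne
  · intro h
    have h2 : (Equiv.swap ((Fintype.equivFin C) a) (⟨0, by omega⟩ : Fin (Fintype.card C)))
        ((Fintype.equivFin C) a) = ⟨0, by omega⟩ := Equiv.swap_apply_left _ _
    exact hab ((Fintype.equivFin C).injective
      ((Equiv.swap _ _).injective (h2.trans h)))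
  · intro h
    rw [Fin.ext_iff] at h
    simp at h

lemma vote1_b {a b : C} (hab : a ≠ b) : vote1 hm a b b = ⟨1, by omega⟩ := by
  simp only [vote1, Equiv.trans_apply]
  exact Equiv.swap_apply_left _ _

/-- Companion vote: ranks everything in reverse order of `vote1`, except `a` stays above `b`
(at the bottom). -/
noncomputable def vote2 (a b : C) : Vote C := (vote1 hm a b).trans (gperm _ hm)

/-- The McGarvey gadget: two votes whose combined net advantage is `2` on `(a,b)`,
`-2` on `(b,a)`, and `0` on every other pair. -/
noncomputable def gadget (a b : C) : List (Vote C) := [vote1 hm a b, vote2 hm a b]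

lemma adv_pair (u v : Vote C) (x y : C) :
    adv [u, v] x y = (if u x < u y then 1 else 0) + (if v x < v y then 1 else 0) := by
  simp only [adv, List.countP_cons, List.countP_nil, decide_eq_true_eq]
  omega

lemma gadget_netadv_pos {a b : C} (hab : a ≠ b) : netadv (gadget hm a b) a b = 2 := by
  have h1a : (vote1 hm a b a).val = 0 := by rw [vote1_a hm hab]
  have h1b : (vote1 hm a b b).val = 1 := by rw [vote1_b hm hab]
  have h2a : (vote2 hm a b a).val = Fintype.card C - 2 := by
    simp [vote2, Equiv.trans_apply, gperm_val hm, h1a]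
  have h2b : (vote2 hm a b b).val = Fintype.card C - 1 := by
    simp [vote2, Equiv.trans_apply, gperm_val hm, h1b]
  have l1 : vote1 hm a b a < vote1 hm a b b := by
    rw [Fin.lt_def, h1a, h1b]; omega
  have l2 : vote2 hm a b a < vote2 hm a b b := by
    rw [Fin.lt_def, h2a, h2b]; omega
  simp only [netadv, gadget, adv_pair, if_pos l1, if_pos l2,
    if_neg (not_lt.mpr l1.le), if_neg (not_lt.mpr l2.le)]
  norm_num

lemma gadget_netadv_zero_lt {a b x y : C} (hab : a ≠ b) (hxy : x ≠ y)
    (h1 : (x, y) ≠ (a, b)) (h2 : (x, y) ≠ (b, a))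
    (hlt : vote1 hm a b x < vote1 hm a b y) :
    netadv (gadget hm a b) x y = 0 := by
  set v := vote1 hm a b with hv
  have hinj : Function.Injective v := v.injective
  have hne : v x ≠ v y := fun h => hxy (hinj h)
  have hva : (v a).val = 0 := by rw [hv, vote1_a hm hab]
  have hvb : (v b).val = 1 := by rw [hv, vote1_b hm hab]
  have hxa : ¬((v x).val = 0 ∧ (v y).val = 1) := by
    rintro ⟨hx0, hy1⟩
    apply h1
    have hx : x = a := hinj (Fin.ext (hx0.trans hva.symm))
    have hy : y = b := hinj (Fin.ext (hy1.trans hvb.symm))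
    simp [hx, hy]
  have hxb : ¬((v x).val = 1 ∧ (v y).val = 0) := by
    rintro ⟨hx1, hy0⟩
    apply h2
    have hx : x = b := hinj (Fin.ext (hx1.trans hvb.symm))
    have hy : y = a := hinj (Fin.ext (hy0.trans hva.symm))
    simp [hx, hy]
  have hgx := gperm_val hm (v x)
  have hgy := gperm_val hm (v y)
  have hvlt : (v x).val < (v y).val := hlt
  have hxlt : (v x).val < Fintype.card C := (v x).isLt
  have hylt : (v y).val < Fintype.card C := (v y).isLt
  have B2 : vote2 hm a b y < vote2 hm a b x := by
    simp only [vote2, Equiv.trans_apply, Fin.lt_def, ← hv]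
    rw [Fin.lt_def] at *
    split_ifs at hgx hgy <;> omega
  have B1 : ¬ (vote2 hm a b x < vote2 hm a b y) := not_lt.mpr B2.le
  rw [hv] at hlt
  simp only [netadv, gadget, adv_pair, if_pos hlt, if_neg (not_lt.mpr hlt.le),
    if_neg B1, if_pos B2]
  norm_num

lemma gadget_netadv_zero {a b x y : C} (hab : a ≠ b) (hxy : x ≠ y)
    (h1 : (x, y) ≠ (a, b)) (h2 : (x, y) ≠ (b, a)) :
    netadv (gadget hm a b) x y = 0 := by
  have hne : vote1 hm a b x ≠ vote1 hm a b y :=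
    fun h => hxy ((vote1 hm a b).injective h)
  rcases lt_or_gt_of_ne hne with h | h
  · exact gadget_netadv_zero_lt hm hab hxy h1 h2 h
  · rw [netadv_anti,
      gadget_netadv_zero_lt hm hab hxy.symm
        (fun hh => h2 (by rw [Prod.ext_iff] at hh ⊢; exact ⟨hh.2, hh.1⟩))
        (fun hh => h1 (by rw [Prod.ext_iff] at hh ⊢; exact ⟨hh.2, hh.1⟩)) h]
    ring

end Aux


lemma even_list_sum {L : List ℕ} (h : ∀ x ∈ L, Even x) : Even L.sum := by
  induction L with
  | nil => simp
  | cons a t ih =>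
    rw [List.sum_cons]
    exact (h a (by simp)).add (ih fun x hx => h x (List.mem_cons_of_mem _ hx))

/-- **McGarvey's method, odd case.** Every antisymmetric integer-valued function `N` on
pairs of candidates whose value is odd on every pair of distinct candidates is the net
advantage function of some profile consisting of an odd number of votes. -/
theorem mcgarvey_odd {C : Type*} [Fintype C] [DecidableEq C]
    (hm : 2 ≤ Fintype.card C)
    (N : C × C → ℤ)
    (hanti : ∀ a b : C, N (a, b) = - N (b, a))
    (hodd : ∀ a b : C, a ≠ b → Odd (N (a, b))) :
    ∃ P : List (Vote C),
      Odd P.length ∧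
      ∀ a b : C, a ≠ b → netadv P a b = N (a, b) := by
  classical
  set v0 : Vote C := Fintype.equivFin C with hv0
  set M : C × C → ℤ := fun p => N p - netadv [v0] p.1 p.2 with hMdef
  set copies : C × C → ℕ := fun p => (M p / 2).toNat with hcopies
  set blocks : List (List (Vote C)) :=
    (Finset.univ : Finset (C × C)).toList.map
      (fun p => (List.replicate (copies p) (gadget hm p.1 p.2)).flatten) with hblocks
  -- basic facts about M
  have hMeven : ∀ a b : C, a ≠ b → Even (M (a, b)) := by
    intro a b hab
    have h1 : Odd (netadv [v0] a b) := by
      have : netadv [v0] a b = (if v0 a < v0 b then 1 else 0) - (if v0 b < v0 a then 1 else 0) := by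
        simp only [netadv, adv, List.countP_cons, List.countP_nil, decide_eq_true_eq]
        split_ifs <;> norm_num
      rcases lt_or_gt_of_ne (fun h : v0 a = v0 b => hab (v0.injective h)) with h | h
      · rw [this, if_pos h, if_neg (not_lt.mpr h.le)]; exact ⟨0, by ring⟩
      · rw [this, if_neg (not_lt.mpr h.le), if_pos h]; exact ⟨-1, by ring⟩
    have := (hodd a b hab).sub_odd h1
    simpa [hMdef] using this
  have hManti : ∀ a b : C, M (a, b) = - M (b, a) := by
    intro a b
    simp only [hMdef]
    rw [hanti a b, netadv_anti]
    ring
  have htwo : ∀ a b : C, a ≠ b → 0 ≤ M (a, b) → (2 * (copies (a, b)) : ℤ) = M (a, b) := by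
    intro a b hab hpos
    obtain ⟨k, hk⟩ := hMeven a b hab
    have hk2 : M (a, b) = 2 * k := by omega
    have : M (a, b) / 2 = k := by omega
    simp only [hcopies, this]
    rw [Int.toNat_of_nonneg (by omega)]
    omega
  have hzero : ∀ a b : C, M (a, b) < 0 → copies (a, b) = 0 := by
    intro a b hneg
    simp only [hcopies]
    omega
  -- net advantage of the correction part
  have hrest : ∀ x y : C, x ≠ y →
      netadv blocks.flatten x y = 2 * (copies (x, y) : ℤ) - 2 * (copies (y, x) : ℤ) := by
    intro x y hxy
    rw [netadv_flatten, hblocks, List.map_map]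
    have hsum : ∀ p : C × C,
        netadv (List.replicate (copies p) (gadget hm p.1 p.2)).flatten x y
          = (copies p : ℤ) * netadv (gadget hm p.1 p.2) x y := by
      intro p
      rw [netadv_flatten, List.map_replicate, List.sum_replicate, nsmul_eq_mul]
    have key : ∀ p : C × C,
        ((fun p : C × C => netadv (List.replicate (copies p) (gadget hm p.1 p.2)).flatten x y) ∘ id) p
          = (if p = (x, y) then 2 * (copies p : ℤ) else 0)
            + (if p = (y, x) then -(2 * (copies p : ℤ)) else 0) := by
      intro p
      obtain ⟨p1, p2⟩ := p
      simp only [Function.comp, id_eq, hsum]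
      by_cases hp1 : (p1, p2) = (x, y)
      · have e1 : p1 = x := (Prod.mk.injEq _ _ _ _ ▸ hp1).1
        have e2 : p2 = y := (Prod.mk.injEq _ _ _ _ ▸ hp1).2
        rw [if_pos hp1, if_neg (fun hh => hxy (e1.symm.trans (Prod.mk.injEq _ _ _ _ ▸ hh).1))]
        rw [e1, e2, gadget_netadv_pos hm hxy]
        ring
      · by_cases hp2 : (p1, p2) = (y, x)
        · have e1 : p1 = y := (Prod.mk.injEq _ _ _ _ ▸ hp2).1
          have e2 : p2 = x := (Prod.mk.injEq _ _ _ _ ▸ hp2).2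
          rw [if_neg hp1, if_pos hp2, e1, e2]
          rw [show netadv (gadget hm y x) x y = -2 by
            rw [netadv_anti, gadget_netadv_pos hm hxy.symm]]
          ring
        · rw [if_neg hp1, if_neg hp2]
          by_cases hpd : p1 = p2
          · have hc : copies (p1, p2) = 0 := by
              have hN : N (p1, p2) = 0 := by
                have h := hanti p1 p2
                rw [hpd] at h ⊢
                omega
              have hMd : M (p1, p2) = 0 := by
                simp only [hMdef, hN]
                rw [hpd]
                simp [netadv_self]
              simp [hcopies, hMd]
            simp [hc]
          · rw [gadget_netadv_zero hm hpd hxy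
              (fun hh => hp1 (by rw [Prod.ext_iff] at hh ⊢; exact ⟨hh.1.symm, hh.2.symm⟩))
              (fun hh => hp2 (by rw [Prod.ext_iff] at hh ⊢; exact ⟨hh.2.symm, hh.1.symm⟩))]
            ring
    calc (List.map ((fun l => netadv l x y) ∘ fun p : C × C =>
            (List.replicate (copies p) (gadget hm p.1 p.2)).flatten)
            (Finset.univ : Finset (C × C)).toList).sum
        = ∑ p : C × C, ((if p = (x, y) then 2 * (copies p : ℤ) else 0)
            + (if p = (y, x) then -(2 * (copies p : ℤ)) else 0)) := by
          rw [← Finset.sum_map_toList]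
          congr 1
          apply List.map_congr_left
          intro p _
          exact key p
      _ = 2 * (copies (x, y) : ℤ) - 2 * (copies (y, x) : ℤ) := by
          rw [Finset.sum_add_distrib, Finset.sum_ite_eq' Finset.univ (x, y),
            Finset.sum_ite_eq' Finset.univ (y, x)]
          simp only [Finset.mem_univ, if_true]
          ring
  refine ⟨v0 :: blocks.flatten, ?_, ?_⟩
  · have heven : Even blocks.flatten.length := by
      rw [List.length_flatten]
      apply even_list_sum
      intro l hl
      simp only [hblocks, List.map_map, List.mem_map] at hl
      obtain ⟨p, _, rfl⟩ := hl
      simp only [Function.comp, List.length_flatten, List.map_replicate, List.sum_replicate,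
        gadget, List.length_cons, List.length_nil, smul_eq_mul]
      exact ⟨copies p, by ring⟩
    rw [List.length_cons]
    exact heven.add_one
  · intro a b hab
    have hr := hrest a b hab
    have hMab : M (a, b) = N (a, b) - netadv [v0] a b := rfl
    have hMba : M (b, a) = N (b, a) - netadv [v0] b a := rfl
    have hnv : netadv [v0] a b = - netadv [v0] b a := netadv_anti _ _ _
    have hNab := hanti a b
    rw [show (v0 :: blocks.flatten) = [v0] ++ blocks.flatten from rfl, netadv_append, hr]
    by_cases hpos : 0 ≤ M (a, b)
    · have h1 := htwo a b hab hpos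
      have h2 : copies (b, a) = 0 := by
        have hba : M (b, a) ≤ 0 := by rw [hManti b a]; omega
        rcases lt_or_eq_of_le hba with h | h
        · exact hzero b a h
        · simp [hcopies, h]
      rw [h2]
      push_cast
      omega
    · push_neg at hpos
      have h1 := hzero a b hpos
      have h2 := htwo b a hab.symm (by rw [hManti b a]; omega)
      rw [h1]
      push_cast
      omega
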